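/- Let A be an Artin algebra and μ the Gabriel–Roiter measure. If X is the directed union of submodules X_α, then μ(X) = sup_α μ(X_α) in the lexicographically ordered power set 2^ℕ. -/

import Mathlib

universe u v

/-- The lexicographic order on the power set of `ℕ`:
`I ≤ J` iff `inf (J \ I) ≤ inf (I \ J)`, where the infimum of the empty set is `∞`. -/
def lexLE (I J : Set ℕ) : Prop :=
  (⨅ n ∈ J \ I, (n : ℕ∞)) ≤ ⨅ n ∈ I \ J, (n : ℕ∞)

/-- `I` is a supremum of `S` with respect to the lexicographic order. -/
def lexIsLUB (S : Set (Set ℕ)) (I : Set ℕ) : Prop :=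
  (∀ J ∈ S, lexLE J I) ∧ ∀ K : Set ℕ, (∀ J ∈ S, lexLE J K) → lexLE I K

/-- The composition length of the module `M` is `n`. -/
def moduleLengthIs (A : Type u) [Ring A] (M : Type v) [AddCommGroup M] [Module A M]
    (n : ℕ) : Prop :=
  ∃ s : CompositionSeries (Submodule A M), s.head = ⊥ ∧ s.last = ⊤ ∧ s.length = n

/-- `M` is an indecomposable module: nonzero and not a direct sum of two nonzero
submodules. -/
def IsIndecModule (A : Type u) [Ring A] (M : Type v) [AddCommGroup M] [Module A M] : Prop :=
  Nontrivial M ∧ ∀ N₁ N₂ : Submodule A M, IsCompl N₁ N₂ → N₁ = ⊥ ∨ N₂ = ⊥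

/-- The sets `{ℓ(X₁), …, ℓ(X_r)}` attached to the chains `X₁ ⊊ … ⊊ X_r ⊆ M` of
indecomposable finite-length submodules of `M`. -/
def grChainSets (A : Type u) [Ring A] (M : Type v) [AddCommGroup M] [Module A M] :
    Set (Set ℕ) :=
  { I | ∃ (r : ℕ) (c : Fin (r + 1) → Submodule A M),
      StrictMono c ∧
      (∀ i, IsIndecModule A (c i) ∧ IsFiniteLength A (c i)) ∧
      I = { n | ∃ i, moduleLengthIs A (c i) n } }

/-- `I` is the Gabriel–Roiter measure of `M`: the supremum in the lexicographically
ordered power set of `ℕ` of the length sets of chains of indecomposable finite-length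
submodules of `M`. -/
def GRIsMeasure (A : Type u) [Ring A] (M : Type v) [AddCommGroup M] [Module A M]
    (I : Set ℕ) : Prop :=
  lexIsLUB (grChainSets A M) I


universe w

lemma lex_inf_le {S : Set ℕ} {m : ℕ} (hm : m ∈ S) : (⨅ n ∈ S, (n : ℕ∞)) ≤ m :=
  iInf_le_of_le m (iInf_le_of_le hm le_rfl)

lemma lex_le_inf {S : Set ℕ} {k : ℕ∞} (h : ∀ n ∈ S, k ≤ n) : k ≤ ⨅ n ∈ S, (n : ℕ∞) :=
  le_iInf fun n => le_iInf fun hn => h n hn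

lemma lexLE_iff (I J : Set ℕ) :
    lexLE I J ↔ I = J ∨ ∃ n, n ∈ J ∧ n ∉ I ∧ ∀ m, m < n → (m ∈ I ↔ m ∈ J) := by
  constructor
  · intro h
    rcases (J \ I).eq_empty_or_nonempty with he | hne
    · left
      have h2 : (⨅ n ∈ I \ J, (n : ℕ∞)) = ⊤ := by
        refine top_le_iff.mp ?_
        calc (⊤ : ℕ∞) = ⨅ n ∈ J \ I, (n : ℕ∞) := by rw [he]; simp
        _ ≤ _ := h
      have hIJ : I \ J = ∅ := by
        by_contra hc
        obtain ⟨m, hm⟩ := Set.nonempty_iff_ne_empty.mpr hc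
        have h3 := lex_inf_le hm
        rw [h2] at h3
        exact (WithTop.coe_ne_top (a := m)) (top_le_iff.mp h3)
      exact le_antisymm (Set.diff_eq_empty.mp hIJ) (Set.diff_eq_empty.mp he)
    · right
      set n := sInf (J \ I) with hn
      have hnmem : n ∈ J \ I := Nat.sInf_mem hne
      refine ⟨n, hnmem.1, hnmem.2, fun m hm => ?_⟩
      constructor
      · intro hmI
        by_contra hmJ
        have h1 : (⨅ k ∈ I \ J, (k : ℕ∞)) ≤ m := lex_inf_le ⟨hmI, hmJ⟩
        have h2 : (n : ℕ∞) ≤ ⨅ k ∈ J \ I, (k : ℕ∞) :=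
          lex_le_inf fun k hk => by exact_mod_cast Nat.sInf_le hk
        have h3 : (n : ℕ∞) ≤ m := h2.trans (h.trans h1)
        exact absurd (by exact_mod_cast h3) (not_le.mpr hm)
      · intro hmJ
        by_contra hmI
        exact not_le.mpr hm (Nat.sInf_le (show m ∈ J \ I from ⟨hmJ, hmI⟩))
  · rintro (rfl | ⟨n, hnJ, hnI, hagree⟩)
    · exact le_refl _
    · unfold lexLE
      have h1 : (⨅ k ∈ J \ I, (k : ℕ∞)) ≤ n := lex_inf_le ⟨hnJ, hnI⟩
      have h2 : (n : ℕ∞) ≤ ⨅ k ∈ I \ J, (k : ℕ∞) := by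
        refine lex_le_inf fun k hk => ?_
        have hk2 : ¬ k < n := fun hkn => hk.2 ((hagree k hkn).mp hk.1)
        exact_mod_cast not_lt.mp hk2
      exact h1.trans h2

lemma lexLE_trans {I J K : Set ℕ} (h1 : lexLE I J) (h2 : lexLE J K) : lexLE I K := by
  rw [lexLE_iff] at h1 h2 ⊢
  rcases h1 with rfl | ⟨n₁, hn₁J, hn₁I, ha₁⟩
  · exact h2
  rcases h2 with rfl | ⟨n₂, hn₂K, hn₂J, ha₂⟩
  · exact Or.inr ⟨n₁, hn₁J, hn₁I, ha₁⟩
  right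
  rcases lt_trichotomy n₁ n₂ with h | h | h
  · exact ⟨n₁, (ha₂ n₁ h).mp hn₁J, hn₁I, fun m hm => (ha₁ m hm).trans (ha₂ m (hm.trans h))⟩
  · exact absurd (h ▸ hn₁J) hn₂J
  · exact ⟨n₂, hn₂K, fun hc => hn₂J ((ha₁ n₂ h).mp hc),
      fun m hm => (ha₁ m (hm.trans h)).trans (ha₂ m hm)⟩

section congr

variable {A : Type u} [Ring A] {M : Type v} {M' : Type w}
  [AddCommGroup M] [Module A M] [AddCommGroup M'] [Module A M']

lemma moduleLengthIs_congr (e : M ≃ₗ[A] M') {n : ℕ} (h : moduleLengthIs A M n) :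
    moduleLengthIs A M' n := by
  obtain ⟨s, h1, h2, h3⟩ := h
  let f : Submodule A M ≃o Submodule A M' := Submodule.orderIsoMapComap e
  refine ⟨⟨s.length, fun i => f (s.toFun i), fun i => ?_⟩, ?_, ?_, h3⟩
  · exact (apply_covBy_apply_iff f).mpr (s.step i)
  · show f (s.toFun 0) = ⊥
    rw [show s.toFun 0 = s.head from rfl, h1, f.map_bot]
  · show f (s.toFun (Fin.last _)) = ⊤
    rw [show s.toFun (Fin.last _) = s.last from rfl, h2, f.map_top]

lemma isIndecModule_congr (e : M ≃ₗ[A] M') (h : IsIndecModule A M) : IsIndecModule A M' := by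
  obtain ⟨h1, h2⟩ := h
  let f : Submodule A M ≃o Submodule A M' := Submodule.orderIsoMapComap e
  refine ⟨e.symm.toEquiv.nontrivial, fun N₁ N₂ hc => ?_⟩
  rcases h2 (f.symm N₁) (f.symm N₂) (f.symm.isCompl hc) with h | h
  · left
    have := congrArg f h
    rwa [f.apply_symm_apply, f.map_bot] at this
  · right
    have := congrArg f h
    rwa [f.apply_symm_apply, f.map_bot] at this

lemma isFiniteLength_congr (e : M ≃ₗ[A] M') (h : IsFiniteLength A M) : IsFiniteLength A M' := by
  rw [isFiniteLength_iff_isNoetherian_isArtinian] at h ⊢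
  obtain ⟨h1, h2⟩ := h
  exact ⟨isNoetherian_of_linearEquiv e, isArtinian_of_linearEquiv e⟩

end congr

section chains

variable {A : Type u} [Ring A] {X : Type v} [AddCommGroup X] [Module A X]

lemma grChainSets_map (N : Submodule A X) {J : Set ℕ} (hJ : J ∈ grChainSets A N) :
    J ∈ grChainSets A X := by
  obtain ⟨r, c, hmono, hprop, rfl⟩ := hJ
  refine ⟨r, fun i => (c i).map N.subtype, ?_, ?_, ?_⟩
  · intro a b hab
    refine lt_of_le_of_ne (Submodule.map_mono (hmono.monotone hab.le)) fun hEq => hab.ne ?_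
    exact hmono.injective (Submodule.map_injective_of_injective N.injective_subtype hEq)
  · intro i
    have e := Submodule.equivMapOfInjective N.subtype N.injective_subtype (c i)
    exact ⟨isIndecModule_congr e (hprop i).1, isFiniteLength_congr e (hprop i).2⟩
  · ext n
    simp only [Set.mem_setOf_eq]
    exact ⟨fun ⟨i, hi⟩ => ⟨i, moduleLengthIs_congr
        (Submodule.equivMapOfInjective N.subtype N.injective_subtype (c i)) hi⟩,
      fun ⟨i, hi⟩ => ⟨i, moduleLengthIs_congr
        (Submodule.equivMapOfInjective N.subtype N.injective_subtype (c i)).symm hi⟩⟩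

lemma grChainSets_comap (N : Submodule A X) {J : Set ℕ} {r : ℕ}
    {c : Fin (r + 1) → Submodule A X} (hmono : StrictMono c)
    (hprop : ∀ i, IsIndecModule A (c i) ∧ IsFiniteLength A (c i))
    (hJeq : J = { n | ∃ i, moduleLengthIs A (c i) n })
    (hcN : ∀ i, c i ≤ N) : J ∈ grChainSets A N := by
  have hmc : ∀ i, Submodule.map N.subtype ((c i).comap N.subtype) = c i := fun i => by
    rw [Submodule.map_comap_subtype, inf_eq_right.mpr (hcN i)]
  refine ⟨r, fun i => (c i).comap N.subtype, ?_, ?_, ?_⟩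
  · intro a b hab
    refine lt_of_le_of_ne (Submodule.comap_mono (hmono.monotone hab.le)) fun hEq => hab.ne ?_
    refine hmono.injective ?_
    rw [← hmc a, ← hmc b]
    exact congrArg (Submodule.map N.subtype) hEq
  · intro i
    have e := (Submodule.comapSubtypeEquivOfLe (hcN i)).symm
    exact ⟨isIndecModule_congr e (hprop i).1, isFiniteLength_congr e (hprop i).2⟩
  · rw [hJeq]
    ext n
    simp only [Set.mem_setOf_eq]
    exact ⟨fun ⟨i, hi⟩ => ⟨i, moduleLengthIs_congr
        (Submodule.comapSubtypeEquivOfLe (hcN i)).symm hi⟩,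
      fun ⟨i, hi⟩ => ⟨i, moduleLengthIs_congr (Submodule.comapSubtypeEquivOfLe (hcN i)) hi⟩⟩

lemma fg_of_isFiniteLength (p : Submodule A X) (h : IsFiniteLength A p) : p.FG := by
  have hN : IsNoetherian A p := (isFiniteLength_iff_isNoetherian_isArtinian.mp h).1
  exact (Submodule.fg_top p).mp (IsNoetherian.noetherian ⊤)

lemma fg_le_directed_iSup {ι : Type*} [Nonempty ι] (Xα : ι → Submodule A X)
    (hdir : Directed (· ≤ ·) Xα) (hunion : (⨆ α, Xα α) = ⊤)
    (p : Submodule A X) (hp : p.FG) : ∃ α, p ≤ Xα α := by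
  classical
  obtain ⟨s, hs⟩ := hp
  have hmem : ∀ x : s, ∃ α, (x : X) ∈ Xα α := by
    intro x
    have hx : (x : X) ∈ ⨆ α, Xα α := by rw [hunion]; trivial
    exact (Submodule.mem_iSup_of_directed Xα hdir).mp hx
  choose g hg using hmem
  obtain ⟨β, hβ⟩ := hdir.finset_le (s.attach.image g)
  refine ⟨β, ?_⟩
  rw [← hs, Submodule.span_le]
  intro x hx
  have hx' : x ∈ s := hx
  have h1 : Xα (g ⟨x, hx'⟩) ≤ Xα β :=
    hβ _ (Finset.mem_image.mpr ⟨⟨x, hx'⟩, Finset.mem_attach _ _, rfl⟩)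
  exact h1 (hg ⟨x, hx'⟩)

end chains

/-- Over an Artin algebra, the Gabriel–Roiter measure of a directed union is the supremum
of the measures: if `X = ⋃_α X_α` is a directed union of submodules, then
`μ(X) = sup_α μ(X_α)` in the lexicographically ordered power set of `ℕ`. -/
theorem GR_directed_union
    {R : Type u} [CommRing R] [IsArtinianRing R]
    {A : Type u} [Ring A] [Algebra R A] [Module.Finite R A]
    (X : Type v) [AddCommGroup X] [Module A X]
    {ι : Type*} [Nonempty ι] (Xα : ι → Submodule A X)
    (hdir : Directed (· ≤ ·) Xα) (hunion : (⨆ α, Xα α) = ⊤)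
    (Iα : ι → Set ℕ) (hIα : ∀ α, GRIsMeasure A (Xα α) (Iα α))
    (I : Set ℕ) (hI : GRIsMeasure A X I) :
    lexIsLUB (Set.range Iα) I := by
  constructor
  · rintro J ⟨α, rfl⟩
    exact (hIα α).2 I fun J' hJ' => hI.1 J' (grChainSets_map (Xα α) hJ')
  · intro K hK
    refine hI.2 K fun J hJ => ?_
    obtain ⟨r, c, hmono, hprop, hJeq⟩ := hJ
    obtain ⟨α, hα⟩ := fg_le_directed_iSup Xα hdir hunion (c (Fin.last r))
      (fg_of_isFiniteLength _ (hprop (Fin.last r)).2)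
    have hJα : J ∈ grChainSets A (Xα α) :=
      grChainSets_comap (Xα α) hmono hprop hJeq
        (fun i => (hmono.monotone (Fin.le_last i)).trans hα)
    exact lexLE_trans ((hIα α).1 J hJα) (hK (Iα α) ⟨α, rfl⟩)
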